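/- Let 𝕂 = ℝ or ℂ, let A be an n×n lower triangular matrix and B an n×n diagonal matrix over 𝕂 with 0 < |B_n| < … < |B_2| < |B_1| < 1 < |A_1| < |A_2| < … < |A_n|, such that (B_1, A_1) is a generating pair and ln|B_j|/ln|A_j| < ln|B_1|/ln|A_1| for every j ≥ 2. Then for every p ∈ 𝕂ⁿ with p_1 ≠ 0 and every x_1 ∈ 𝕂, there exists a sequence (k_i, l_i) of pairs of natural numbers with k_i → ∞ and l_i → ∞ such that B^{k_i} A^{l_i} p → (x_1, 0, …, 0)ᵀ as i → ∞. In particular, 𝕂 × {0}^{n−1} is contained in the closure of the set {B^k A^l p : k, l ∈ ℕ}. -/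

import Mathlib

open Matrix Filter Topology

/-- A pair `(a, b) ∈ 𝕂²` is *generating* if `|a| < |b|` and `{a^m b^n : m, n ∈ ℕ}`
is dense in `𝕂`. -/
def GenPair {𝕂 : Type*} [RCLike 𝕂] (a b : 𝕂) : Prop :=
  ‖a‖ < ‖b‖ ∧ Dense {x : 𝕂 | ∃ m n : ℕ, x = a ^ m * b ^ n}

section Aux

variable {𝕂 : Type*} [RCLike 𝕂] {n : ℕ}

/-- First row of a power of a lower triangular matrix. -/
lemma aux_row_zero (hn : 0 < n) (A : Matrix (Fin n) (Fin n) 𝕂)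
    (hAlow : ∀ i j : Fin n, i < j → A i j = 0) :
    ∀ (l : ℕ) (m : Fin n), (A ^ l) ⟨0, hn⟩ m
      = if m = ⟨0, hn⟩ then (A ⟨0, hn⟩ ⟨0, hn⟩) ^ l else 0 := by
  intro l
  induction l with
  | zero =>
      intro m
      by_cases h : m = (⟨0, hn⟩ : Fin n) <;>
        simp [h, Matrix.one_apply, Ne.symm]
  | succ l ih =>
      intro m
      rw [pow_succ, Matrix.mul_apply]
      have key : ∀ s : Fin n, (A ^ l) ⟨0, hn⟩ s * A s m
          = if s = (⟨0, hn⟩ : Fin n) then (A ⟨0, hn⟩ ⟨0, hn⟩) ^ l * A ⟨0, hn⟩ m else 0 := by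
        intro s
        rw [ih s]
        by_cases h : s = (⟨0, hn⟩ : Fin n)
        · subst h; simp
        · simp [h]
      rw [Finset.sum_congr rfl fun s _ => key s, Finset.sum_ite_eq' Finset.univ]
      simp only [Finset.mem_univ, if_true]
      by_cases h : m = (⟨0, hn⟩ : Fin n)
      · rw [if_pos h, h, pow_succ]
      · rw [if_neg h]
        have hm0 : (m : ℕ) ≠ 0 := fun hm => h (Fin.ext hm)
        have him : (⟨0, hn⟩ : Fin n) < m := Fin.lt_def.mpr (Nat.pos_of_ne_zero hm0)
        rw [hAlow _ _ him, mul_zero]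

/-- Entry growth bound for powers of a lower triangular matrix with increasing diagonal. -/
lemma aux_entry_bound (A : Matrix (Fin n) (Fin n) 𝕂)
    (hAlow : ∀ i j : Fin n, i < j → A i j = 0)
    (hd : ∀ i : Fin n, 1 ≤ ‖A i i‖)
    (hmono : Monotone fun i : Fin n => ‖A i i‖)
    (M : ℝ) (hM1 : 1 ≤ M) (hM : ∀ i j : Fin n, ‖A i j‖ ≤ M) :
    ∀ (l : ℕ) (i j : Fin n),
      ‖(A ^ l) i j‖ ≤ ((n + 1) * M) ^ (i : ℕ) * ((l : ℝ) + 1) ^ (i : ℕ) * ‖A i i‖ ^ l := by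
  have hn0 : (0:ℝ) ≤ n := Nat.cast_nonneg n
  have hK1 : (1:ℝ) ≤ (n + 1) * M := by nlinarith
  have hK0 : (0:ℝ) ≤ (n + 1) * M := by linarith
  intro l
  induction l with
  | zero =>
      intro i j
      have h1 : ‖(A ^ 0) i j‖ ≤ 1 := by
        rw [pow_zero, Matrix.one_apply]
        split_ifs <;> simp
      calc ‖(A ^ 0) i j‖ ≤ 1 := h1
        _ ≤ ((n + 1) * M) ^ (i : ℕ) := one_le_pow₀ hK1
        _ = ((n + 1) * M) ^ (i : ℕ) * (((0:ℕ) : ℝ) + 1) ^ (i : ℕ) * ‖A i i‖ ^ 0 := by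
            norm_num
  | succ l ih =>
      intro i j
      set K : ℝ := (n + 1) * M with hK
      set a : ℝ := ‖A i i‖ with ha
      have hai : (1:ℝ) ≤ a := hd i
      have ha0 : (0:ℝ) ≤ a := by linarith
      rw [pow_succ', Matrix.mul_apply]
      have hsplit : ∑ m : Fin n, A i m * (A ^ l) m j
          = A i i * (A ^ l) i j + ∑ m ∈ Finset.univ.erase i, A i m * (A ^ l) m j :=
        (Finset.add_sum_erase Finset.univ _ (Finset.mem_univ i)).symm
      rw [hsplit]
      have hterm_i : ‖A i i * (A ^ l) i j‖
          ≤ K ^ (i : ℕ) * ((l : ℝ) + 1) ^ (i : ℕ) * a ^ (l + 1) := by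
        rw [norm_mul, pow_succ]
        calc ‖A i i‖ * ‖(A ^ l) i j‖
            ≤ ‖A i i‖ * (K ^ (i : ℕ) * ((l : ℝ) + 1) ^ (i : ℕ) * ‖A i i‖ ^ l) :=
              mul_le_mul_of_nonneg_left (ih i j) (by linarith)
          _ = K ^ (i : ℕ) * ((l : ℝ) + 1) ^ (i : ℕ) * (a ^ l * a) := by rw [← ha]; ring
      rcases Nat.eq_zero_or_eq_succ_pred (i : ℕ) with h0 | hs
      · -- i is the first index: all other terms vanish
        have herase : ∑ m ∈ Finset.univ.erase i, A i m * (A ^ l) m j = 0 := by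
          apply Finset.sum_eq_zero
          intro m hm
          have hmne : m ≠ i := Finset.ne_of_mem_erase hm
          have him : i < m := by
            have : (m : ℕ) ≠ 0 := fun hmv => hmne (Fin.ext (by rw [hmv, h0]))
            exact Fin.lt_def.mpr (by rw [h0]; exact Nat.pos_of_ne_zero this)
          rw [hAlow i m him, zero_mul]
        rw [herase, add_zero]
        refine le_trans hterm_i ?_
        rw [h0]
        norm_num
      · set s : ℕ := (i : ℕ) - 1 with hsdef
        have his : (i : ℕ) = s + 1 := hs
        have hl1 : (1:ℝ) ≤ (l : ℝ) + 1 := by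
          have : (0:ℝ) ≤ (l : ℝ) := Nat.cast_nonneg l
          linarith
        have hKs0 : (0:ℝ) ≤ K ^ s := pow_nonneg hK0 s
        have hKs10 : (0:ℝ) ≤ K ^ (s + 1) := pow_nonneg hK0 (s + 1)
        have hal0 : (0:ℝ) ≤ a ^ (l + 1) := pow_nonneg ha0 (l + 1)
        have hT0 : (0:ℝ) ≤ M * (K ^ s * ((l : ℝ) + 1) ^ s * a ^ (l + 1)) := by
          apply mul_nonneg (by linarith)
          exact mul_nonneg (mul_nonneg hKs0 (by positivity)) hal0
        have herase : ‖∑ m ∈ Finset.univ.erase i, A i m * (A ^ l) m j‖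
            ≤ (n : ℝ) * (M * (K ^ s * ((l : ℝ) + 1) ^ s * a ^ (l + 1))) := by
          calc ‖∑ m ∈ Finset.univ.erase i, A i m * (A ^ l) m j‖
              ≤ ∑ m ∈ Finset.univ.erase i, ‖A i m * (A ^ l) m j‖ := norm_sum_le _ _
            _ ≤ ∑ _m ∈ Finset.univ.erase i, M * (K ^ s * ((l : ℝ) + 1) ^ s * a ^ (l + 1)) := by
                apply Finset.sum_le_sum
                intro m hm
                have hmne : m ≠ i := Finset.ne_of_mem_erase hm
                by_cases hlt : i < m
                · rw [hAlow i m hlt, zero_mul, norm_zero]; exact hT0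
                · have hmi : m < i := lt_of_le_of_ne (not_lt.mp hlt) hmne
                  have hms : (m : ℕ) ≤ s := by
                    have := Fin.lt_def.mp hmi
                    omega
                  have ham : ‖A m m‖ ≤ a := hmono hmi.le
                  have ham1 : (1:ℝ) ≤ ‖A m m‖ := hd m
                  rw [norm_mul]
                  calc ‖A i m‖ * ‖(A ^ l) m j‖
                      ≤ M * (K ^ (m : ℕ) * ((l : ℝ) + 1) ^ (m : ℕ) * ‖A m m‖ ^ l) :=
                        mul_le_mul (hM i m) (ih m j) (norm_nonneg _) (by linarith)
                    _ ≤ M * (K ^ s * ((l : ℝ) + 1) ^ s * a ^ (l + 1)) := by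
                        apply mul_le_mul_of_nonneg_left _ (by linarith : (0:ℝ) ≤ M)
                        have e1 : K ^ (m : ℕ) ≤ K ^ s := pow_le_pow_right₀ hK1 hms
                        have e2 : ((l : ℝ) + 1) ^ (m : ℕ) ≤ ((l : ℝ) + 1) ^ s :=
                          pow_le_pow_right₀ hl1 hms
                        have e3 : ‖A m m‖ ^ l ≤ a ^ (l + 1) := by
                          calc ‖A m m‖ ^ l ≤ a ^ l :=
                              pow_le_pow_left₀ (by linarith) ham l
                            _ ≤ a ^ (l + 1) :=
                              pow_le_pow_right₀ (by linarith) (Nat.le_succ l)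
                        have e4 : (0:ℝ) ≤ ((l : ℝ) + 1) ^ (m : ℕ) := by positivity
                        have e6 : (0:ℝ) ≤ ‖A m m‖ ^ l := pow_nonneg (norm_nonneg _) l
                        have e7 : (0:ℝ) ≤ K ^ s * ((l : ℝ) + 1) ^ s :=
                          mul_nonneg hKs0 (by positivity)
                        exact mul_le_mul (mul_le_mul e1 e2 e4 hKs0) e3 e6 e7
            _ ≤ (n : ℝ) * (M * (K ^ s * ((l : ℝ) + 1) ^ s * a ^ (l + 1))) := by
                rw [Finset.sum_const, nsmul_eq_mul]
                apply mul_le_mul_of_nonneg_right _ hT0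
                have hcard : (Finset.univ.erase i).card ≤ n :=
                  le_trans (Finset.card_erase_le) (by simp)
                exact_mod_cast hcard
        have hnm : (n : ℝ) * M ≤ K := by rw [hK]; nlinarith
        have hKs : (n : ℝ) * M * K ^ s ≤ K ^ (s + 1) := by
          rw [pow_succ]
          calc (n : ℝ) * M * K ^ s = K ^ s * ((n : ℝ) * M) := by ring
            _ ≤ K ^ s * K := mul_le_mul_of_nonneg_left hnm hKs0
        have h2 : (n : ℝ) * (M * (K ^ s * ((l : ℝ) + 1) ^ s * a ^ (l + 1)))
            ≤ K ^ (s + 1) * ((l : ℝ) + 1) ^ s * a ^ (l + 1) := by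
          calc (n : ℝ) * (M * (K ^ s * ((l : ℝ) + 1) ^ s * a ^ (l + 1)))
              = ((n : ℝ) * M * K ^ s) * (((l : ℝ) + 1) ^ s * a ^ (l + 1)) := by ring
            _ ≤ K ^ (s + 1) * (((l : ℝ) + 1) ^ s * a ^ (l + 1)) :=
                mul_le_mul_of_nonneg_right hKs (mul_nonneg (by positivity) hal0)
            _ = K ^ (s + 1) * ((l : ℝ) + 1) ^ s * a ^ (l + 1) := by ring
        have hstep : ((l : ℝ) + 1) ^ (s + 1) + ((l : ℝ) + 1) ^ s ≤ ((l : ℝ) + 2) ^ (s + 1) := by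
          have h1 : ((l : ℝ) + 1) ^ s ≤ ((l : ℝ) + 2) ^ s :=
            pow_le_pow_left₀ (by positivity) (by linarith) s
          calc ((l : ℝ) + 1) ^ (s + 1) + ((l : ℝ) + 1) ^ s
              = ((l : ℝ) + 1) ^ s * ((l : ℝ) + 2) := by ring
            _ ≤ ((l : ℝ) + 2) ^ s * ((l : ℝ) + 2) :=
                mul_le_mul_of_nonneg_right h1 (by positivity)
            _ = ((l : ℝ) + 2) ^ (s + 1) := (pow_succ _ _).symm
        have h3 : K ^ (s + 1) * ((l : ℝ) + 1) ^ (s + 1) * a ^ (l + 1)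
              + K ^ (s + 1) * ((l : ℝ) + 1) ^ s * a ^ (l + 1)
            ≤ K ^ (s + 1) * ((l : ℝ) + 2) ^ (s + 1) * a ^ (l + 1) := by
          calc K ^ (s + 1) * ((l : ℝ) + 1) ^ (s + 1) * a ^ (l + 1)
                + K ^ (s + 1) * ((l : ℝ) + 1) ^ s * a ^ (l + 1)
              = (K ^ (s + 1) * a ^ (l + 1))
                  * (((l : ℝ) + 1) ^ (s + 1) + ((l : ℝ) + 1) ^ s) := by ring
            _ ≤ (K ^ (s + 1) * a ^ (l + 1)) * ((l : ℝ) + 2) ^ (s + 1) :=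
                mul_le_mul_of_nonneg_left hstep (mul_nonneg hKs10 hal0)
            _ = K ^ (s + 1) * ((l : ℝ) + 2) ^ (s + 1) * a ^ (l + 1) := by ring
        have hgoal_eq : K ^ (i : ℕ) * (((l + 1 : ℕ) : ℝ) + 1) ^ (i : ℕ) * a ^ (l + 1)
            = K ^ (s + 1) * ((l : ℝ) + 2) ^ (s + 1) * a ^ (l + 1) := by
          rw [his]; push_cast; ring
        rw [hgoal_eq]
        rw [his] at hterm_i
        calc ‖A i i * (A ^ l) i j + ∑ m ∈ Finset.univ.erase i, A i m * (A ^ l) m j‖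
            ≤ ‖A i i * (A ^ l) i j‖ + ‖∑ m ∈ Finset.univ.erase i, A i m * (A ^ l) m j‖ :=
              norm_add_le _ _
          _ ≤ K ^ (s + 1) * ((l : ℝ) + 2) ^ (s + 1) * a ^ (l + 1) := by linarith

end Aux

set_option maxHeartbeats 1000000

/-- **Base case of the main theorem.** Let `A` be lower triangular and `B` diagonal
`n × n` matrices over `𝕂 = ℝ` or `ℂ` with
`0 < |B_n| < … < |B_1| < 1 < |A_1| < … < |A_n|`, `(B_1, A_1)` generating and
`ln|B_j|/ln|A_j| < ln|B_1|/ln|A_1|` for `j ≥ 2`. Then for every `p` with `p_1 ≠ 0` and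
every `x_1 ∈ 𝕂` there is a sequence `(k_i, l_i) → (∞, ∞)` with
`B^{k_i} A^{l_i} p → (x_1, 0, …, 0)ᵀ`; in particular `𝕂 × {0}^{n-1}` is contained in
the closure of `{B^k A^l p : k, l ∈ ℕ}`. -/
theorem stmt_6 {𝕂 : Type*} [RCLike 𝕂] {n : ℕ} (hn : 0 < n)
    (A B : Matrix (Fin n) (Fin n) 𝕂)
    (hAlow : ∀ i j : Fin n, i < j → A i j = 0)
    (hBdiag : ∀ i j : Fin n, i ≠ j → B i j = 0)
    (hBpos : ∀ i : Fin n, 0 < ‖B i i‖)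
    (hBanti : StrictAnti fun i : Fin n => ‖B i i‖)
    (hB1 : ‖B ⟨0, hn⟩ ⟨0, hn⟩‖ < 1)
    (hA1 : 1 < ‖A ⟨0, hn⟩ ⟨0, hn⟩‖)
    (hAmono : StrictMono fun i : Fin n => ‖A i i‖)
    (hgen1 : GenPair (B ⟨0, hn⟩ ⟨0, hn⟩) (A ⟨0, hn⟩ ⟨0, hn⟩))
    (hlog : ∀ j : Fin n, (⟨0, hn⟩ : Fin n) < j →
      Real.log ‖B j j‖ / Real.log ‖A j j‖ <
        Real.log ‖B ⟨0, hn⟩ ⟨0, hn⟩‖ / Real.log ‖A ⟨0, hn⟩ ⟨0, hn⟩‖) :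
    ∀ p : Fin n → 𝕂, p ⟨0, hn⟩ ≠ 0 →
      (∀ x₁ : 𝕂, ∃ k l : ℕ → ℕ,
        Tendsto k atTop atTop ∧ Tendsto l atTop atTop ∧
        Tendsto (fun i => (B ^ k i * A ^ l i).mulVec p) atTop
          (nhds fun j : Fin n => if j = ⟨0, hn⟩ then x₁ else 0)) ∧
      {x : Fin n → 𝕂 | ∀ j : Fin n, j ≠ ⟨0, hn⟩ → x j = 0} ⊆
        closure {y : Fin n → 𝕂 | ∃ k l : ℕ, y = (B ^ k * A ^ l).mulVec p} := by
  intro p hp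
  set i0 : Fin n := ⟨0, hn⟩ with hi0
  set b1 : 𝕂 := B i0 i0 with hb1
  set a1 : 𝕂 := A i0 i0 with ha1
  set β : ℝ := ‖b1‖ with hβ
  set α : ℝ := ‖a1‖ with hα
  have hβ0 : 0 < β := hBpos i0
  have hβ1 : β < 1 := hB1
  have hα1 : (1:ℝ) < α := hA1
  have hLb : Real.log β < 0 := Real.log_neg hβ0 hβ1
  have hLa : 0 < Real.log α := Real.log_pos hα1
  have hLbpos : 0 < -Real.log β := by linarith
  set r : ℝ := Real.log α / (-Real.log β) with hr
  have hr0 : 0 < r := div_pos hLa hLbpos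
  have ha1ne : a1 ≠ 0 := by
    intro h; rw [h] at hα; simp [hα] at hα1; linarith [hα1]
  -- diagonal bounds needed for entry lemma
  have hd1 : ∀ i : Fin n, 1 ≤ ‖A i i‖ := by
    intro i
    have : α ≤ ‖A i i‖ := by
      rcases eq_or_ne i i0 with h | h
      · rw [h]
      · have : i0 < i := by
          have : (i : ℕ) ≠ 0 := fun hv => h (Fin.ext hv)
          exact Fin.lt_def.mpr (Nat.pos_of_ne_zero this)
        exact (hAmono this).le
    linarith
  set M : ℝ := 1 + ∑ i : Fin n, ∑ j : Fin n, ‖A i j‖ with hM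
  have hM1 : 1 ≤ M := by
    have : (0:ℝ) ≤ ∑ i : Fin n, ∑ j : Fin n, ‖A i j‖ :=
      Finset.sum_nonneg fun _ _ => Finset.sum_nonneg fun _ _ => norm_nonneg _
    linarith
  have hMb : ∀ i j : Fin n, ‖A i j‖ ≤ M := by
    intro i j
    have h1 : ‖A i j‖ ≤ ∑ j' : Fin n, ‖A i j'‖ :=
      Finset.single_le_sum (fun _ _ => norm_nonneg _) (Finset.mem_univ j)
    have h2 : ∑ j' : Fin n, ‖A i j'‖ ≤ ∑ i' : Fin n, ∑ j' : Fin n, ‖A i' j'‖ :=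
      Finset.single_le_sum (fun _ _ => Finset.sum_nonneg fun _ _ => norm_nonneg _)
        (Finset.mem_univ i)
    linarith
  have hEntry := aux_entry_bound A hAlow hd1 (fun _ _ h => (hAmono.le_iff_le.mpr h))
    M hM1 hMb
  -- B is diagonal
  have hBeq : B = Matrix.diagonal fun m => B m m := by
    ext i j
    rcases eq_or_ne i j with h | h
    · rw [h]; simp [Matrix.diagonal_apply_eq]
    · rw [hBdiag i j h, Matrix.diagonal_apply_ne _ h]
  have hcoord : ∀ (ki li : ℕ) (j : Fin n),
      (B ^ ki * A ^ li).mulVec p j = (B j j) ^ ki * ((A ^ li).mulVec p j) := by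
    intro ki li j
    conv_lhs => rw [hBeq]
    rw [Matrix.diagonal_pow, ← Matrix.mulVec_mulVec, Matrix.mulVec_diagonal, Pi.pow_apply]
  -- first row of A^l
  have hrow0 : ∀ (li : ℕ), ((A ^ li).mulVec p) i0 = a1 ^ li * p i0 := by
    intro li
    rw [Matrix.mulVec, dotProduct]
    have : ∀ m : Fin n, (A ^ li) i0 m * p m
        = if m = i0 then a1 ^ li * p m else 0 := by
      intro m
      rw [aux_row_zero hn A hAlow li m]
      by_cases h : m = i0 <;> simp [h, ← hi0, ha1]
    rw [Finset.sum_congr rfl fun m _ => this m, Finset.sum_ite_eq' Finset.univ]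
    simp
  -- the main statement for a fixed x₁
  have main : ∀ x₁ : 𝕂, ∃ k l : ℕ → ℕ,
      Tendsto k atTop atTop ∧ Tendsto l atTop atTop ∧
      Tendsto (fun i => (B ^ k i * A ^ l i).mulVec p) atTop
        (nhds fun j : Fin n => if j = i0 then x₁ else 0) := by
    intro x₁
    set t : 𝕂 := x₁ / p i0 with ht
    set S : ℝ := ‖t‖ + 1 with hS
    have hS1 : 1 ≤ S := by have := norm_nonneg t; linarith
    set c : ℝ := Real.log S / (-Real.log β) with hc
    -- density of shifted sets
    have hdense : ∀ i : ℕ, ∃ m nn : ℕ, i ≤ nn ∧ ‖b1 ^ m * a1 ^ nn - t‖ < 1 / (i + 1) := by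
      intro i
      have hane : (a1 : 𝕂) ^ i ≠ 0 := pow_ne_zero _ ha1ne
      have hclos := hgen1.2 (t / a1 ^ i)
      have hε : 0 < (1 / ((i:ℝ) + 1)) / ‖a1 ^ i‖ := by
        apply div_pos (by positivity) (norm_pos_iff.mpr hane)
      obtain ⟨y, hy, hdy⟩ := Metric.mem_closure_iff.mp hclos _ hε
      obtain ⟨m, nn, rfl⟩ := hy
      refine ⟨m, nn + i, Nat.le_add_left i nn, ?_⟩
      have key : b1 ^ m * a1 ^ (nn + i) - t = a1 ^ i * (b1 ^ m * a1 ^ nn - t / a1 ^ i) := by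
        field_simp
        ring
      rw [key, norm_mul]
      have : ‖b1 ^ m * a1 ^ nn - t / a1 ^ i‖ < (1 / ((i:ℝ) + 1)) / ‖a1 ^ i‖ := by
        rw [← dist_eq_norm]
        rw [dist_comm]
        exact hdy
      calc ‖a1 ^ i‖ * ‖b1 ^ m * a1 ^ nn - t / a1 ^ i‖
          < ‖a1 ^ i‖ * ((1 / ((i:ℝ) + 1)) / ‖a1 ^ i‖) :=
            mul_lt_mul_of_pos_left this (norm_pos_iff.mpr hane)
        _ = 1 / ((i:ℝ) + 1) := by
            field_simp
    choose k l hl happrox using hdense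
    have hltend : Tendsto l atTop atTop :=
      tendsto_atTop_mono hl tendsto_id
    -- norm upper bound
    have hbound : ∀ i : ℕ, β ^ k i * α ^ l i ≤ S := by
      intro i
      have h1 : ‖b1 ^ k i * a1 ^ l i‖ ≤ ‖b1 ^ k i * a1 ^ l i - t‖ + ‖t‖ := by
        calc ‖b1 ^ k i * a1 ^ l i‖ = ‖(b1 ^ k i * a1 ^ l i - t) + t‖ := by ring_nf
          _ ≤ _ := norm_add_le _ _
      have h2 : (1:ℝ) / ((i:ℝ) + 1) ≤ 1 := by
        rw [div_le_one (by positivity)]; linarith [Nat.cast_nonneg (α := ℝ) i]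
      have h3 : ‖b1 ^ k i * a1 ^ l i‖ ≤ S := by
        have := (happrox i).le
        rw [hS]; linarith
      rwa [norm_mul, norm_pow, norm_pow] at h3
    -- lower bound on k
    have hk : ∀ i : ℕ, r * l i - c ≤ k i := by
      intro i
      have hlog' : (k i : ℝ) * Real.log β + (l i : ℝ) * Real.log α ≤ Real.log S := by
        have h1 : Real.log (β ^ k i * α ^ l i) ≤ Real.log S :=
          Real.log_le_log (by positivity) (hbound i)
        rwa [Real.log_mul (by positivity) (by positivity), Real.log_pow, Real.log_pow] at h1
      have heq : r * l i - c = ((l i : ℝ) * Real.log α - Real.log S) / (-Real.log β) := by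
        rw [hr, hc]; ring
      rw [heq, div_le_iff₀ hLbpos]
      nlinarith
    have hktend : Tendsto k atTop atTop := by
      rw [← tendsto_natCast_atTop_iff (R := ℝ)]
      apply tendsto_atTop_mono hk
      apply tendsto_atTop_add_const_right _ (-c)
      simpa [sub_eq_add_neg] using
        (Tendsto.const_mul_atTop hr0 (tendsto_natCast_atTop_atTop.comp hltend))
    -- first coordinate convergence
    have hfst : Tendsto (fun i => b1 ^ k i * a1 ^ l i) atTop (𝓝 t) := by
      rw [← tendsto_sub_nhds_zero_iff]
      apply squeeze_zero_norm (fun i => (happrox i).le)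
      exact tendsto_one_div_add_atTop_nhds_zero_nat
    refine ⟨k, l, hktend, hltend, ?_⟩
    rw [tendsto_pi_nhds]
    intro j
    by_cases hj : j = i0
    · subst hj
      simp only [if_pos rfl]
      have hcoe : ∀ i : ℕ, (B ^ k i * A ^ l i).mulVec p i0
          = (b1 ^ k i * a1 ^ l i) * p i0 := by
        intro i
        rw [hcoord (k i) (l i) i0, hrow0 (l i)]
        ring
      have hlim : Tendsto (fun i => (b1 ^ k i * a1 ^ l i) * p i0) atTop (𝓝 (t * p i0)) :=
        hfst.mul_const (p i0)
      have ht' : t * p i0 = x₁ := div_mul_cancel₀ x₁ hp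
      rw [ht'] at hlim
      exact hlim.congr fun i => (hcoe i).symm
    · -- other coordinates tend to 0
      simp only [if_neg hj]
      have hij : i0 < j := by
        have : (j : ℕ) ≠ 0 := fun hv => hj (Fin.ext hv)
        exact Fin.lt_def.mpr (Nat.pos_of_ne_zero this)
      set βj : ℝ := ‖B j j‖ with hβj
      set αj : ℝ := ‖A j j‖ with hαj
      have hβj0 : 0 < βj := hBpos j
      have hβjβ : βj < β := hBanti hij
      have hαjα : α < αj := hAmono hij
      have hLbj : Real.log βj < 0 := Real.log_neg hβj0 (by linarith)
      have hLaj : 0 < Real.log αj := Real.log_pos (by linarith)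
      -- δ > 0
      have hδ0 : r * Real.log βj + Real.log αj < 0 := by
        have hcmp := hlog j hij
        rw [div_lt_div_iff₀ hLaj hLa] at hcmp
        have h5 : Real.log α * Real.log βj / (-Real.log β) < -Real.log αj := by
          rw [div_lt_iff₀ hLbpos]
          nlinarith
        have : r * Real.log βj = Real.log α * Real.log βj / (-Real.log β) := by
          rw [hr]; ring
        linarith
      set δ : ℝ := -(r * Real.log βj + Real.log αj) with hδ
      have hδpos : 0 < δ := by rw [hδ]; linarith
      set ρ : ℝ := Real.exp (-δ) with hρ
      have hρ0 : 0 < ρ := Real.exp_pos _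
      have hρ1 : ρ < 1 := Real.exp_lt_one_iff.mpr (by linarith)
      set e : ℕ := (j : ℕ) with he
      set K : ℝ := (n + 1) * M with hKdef
      have hK1 : (1:ℝ) ≤ K := by
        have : (0:ℝ) ≤ n := Nat.cast_nonneg n
        nlinarith
      set P : ℝ := ∑ m : Fin n, ‖p m‖ with hP
      have hP0 : 0 ≤ P := Finset.sum_nonneg fun _ _ => norm_nonneg _
      set E : ℝ := Real.exp (-(c * Real.log βj)) with hE
      have hE0 : 0 < E := Real.exp_pos _
      -- the exponential bound
      have hexp : ∀ i : ℕ, βj ^ k i * αj ^ l i ≤ E * ρ ^ l i := by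
        intro i
        have h1 : βj ^ k i * αj ^ l i
            = Real.exp ((k i : ℝ) * Real.log βj + (l i : ℝ) * Real.log αj) := by
          rw [Real.exp_add, Real.exp_nat_mul, Real.exp_nat_mul,
            Real.exp_log hβj0, Real.exp_log (by linarith : (0:ℝ) < αj)]
        have h2 : (k i : ℝ) * Real.log βj ≤ (r * l i - c) * Real.log βj :=
          mul_le_mul_of_nonpos_right (hk i) hLbj.le
        have h3 : (k i : ℝ) * Real.log βj + (l i : ℝ) * Real.log αj
            ≤ -(c * Real.log βj) + (l i : ℝ) * (-δ) := by
          rw [hδ]; nlinarith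
        rw [h1, hE, hρ]
        rw [← Real.exp_nat_mul, ← Real.exp_add]
        exact Real.exp_le_exp.mpr h3
      -- vector coordinate bound
      have hvec : ∀ i : ℕ, ‖(B ^ k i * A ^ l i).mulVec p j‖
          ≤ (K ^ e * P * E) * (((l i : ℝ) + 1) ^ e * ρ ^ l i) := by
        intro i
        rw [hcoord (k i) (l i) j, norm_mul, norm_pow]
        have hAv : ‖((A ^ l i).mulVec p) j‖ ≤ K ^ e * ((l i : ℝ) + 1) ^ e * αj ^ l i * P := by
          rw [Matrix.mulVec, dotProduct]
          calc ‖∑ m : Fin n, (A ^ l i) j m * p m‖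
              ≤ ∑ m : Fin n, ‖(A ^ l i) j m * p m‖ := norm_sum_le _ _
            _ ≤ ∑ m : Fin n, K ^ e * ((l i : ℝ) + 1) ^ e * αj ^ l i * ‖p m‖ := by
                apply Finset.sum_le_sum
                intro m _
                rw [norm_mul]
                exact mul_le_mul_of_nonneg_right (hEntry (l i) j m) (norm_nonneg _)
            _ = K ^ e * ((l i : ℝ) + 1) ^ e * αj ^ l i * P := by
                rw [← Finset.mul_sum]
        calc βj ^ k i * ‖((A ^ l i).mulVec p) j‖
            ≤ βj ^ k i * (K ^ e * ((l i : ℝ) + 1) ^ e * αj ^ l i * P) := by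
              exact mul_le_mul_of_nonneg_left hAv (by positivity)
          _ = (K ^ e * P * ((l i : ℝ) + 1) ^ e) * (βj ^ k i * αj ^ l i) := by ring
          _ ≤ (K ^ e * P * ((l i : ℝ) + 1) ^ e) * (E * ρ ^ l i) := by
              exact mul_le_mul_of_nonneg_left (hexp i) (by positivity)
          _ = (K ^ e * P * E) * (((l i : ℝ) + 1) ^ e * ρ ^ l i) := by ring
      -- the RHS tends to 0
      have hRHS : Tendsto (fun i => (K ^ e * P * E) * (((l i : ℝ) + 1) ^ e * ρ ^ l i))
          atTop (𝓝 0) := by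
        have hcomp : Tendsto (fun m : ℕ => ((m : ℝ)) ^ e * ρ ^ m) atTop (𝓝 0) :=
          tendsto_pow_const_mul_const_pow_of_lt_one e hρ0.le hρ1
        have hshift : Tendsto (fun i => l i + 1) atTop atTop :=
          tendsto_atTop_mono (fun i => Nat.le_succ_of_le (hl i)) tendsto_id
        have h2 : Tendsto (fun i => (((l i + 1 : ℕ)) : ℝ) ^ e * ρ ^ (l i + 1)) atTop (𝓝 0) :=
          hcomp.comp hshift
        have h3 : Tendsto (fun i => ((l i : ℝ) + 1) ^ e * ρ ^ l i) atTop (𝓝 0) := by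
          have heq : ∀ i : ℕ, ((l i : ℝ) + 1) ^ e * ρ ^ l i
              = ρ⁻¹ * ((((l i + 1 : ℕ)) : ℝ) ^ e * ρ ^ (l i + 1)) := by
            intro i
            push_cast
            rw [pow_succ]
            field_simp
          rw [show (0:ℝ) = ρ⁻¹ * 0 by ring]
          exact (h2.const_mul ρ⁻¹).congr fun i => (heq i).symm
        rw [show (0:ℝ) = (K ^ e * P * E) * 0 by ring]
        exact h3.const_mul _
      exact squeeze_zero_norm hvec (by simpa using hRHS)
  -- assemble
  refine ⟨main, ?_⟩
  intro x hx
  obtain ⟨k, l, _, _, hconv⟩ := main (x i0)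
  have hxeq : (fun j : Fin n => if j = i0 then x i0 else 0) = x := by
    funext j
    by_cases h : j = i0
    · rw [if_pos h, h]
    · rw [if_neg h, (hx j h).symm]
  rw [hxeq] at hconv
  exact mem_closure_of_tendsto hconv
    (Eventually.of_forall fun i => ⟨k i, l i, rfl⟩)
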